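/- arXiv:0901.4913 — 3 statements merged into one kernel-verified Lean document; each statement's English description precedes it below -/
import Mathlib

section
/- Let A be the 2×2 rotation matrix by angle θ acting on a pair of quaternions (u₁, u₂), and suppose A(u₁,u₂)ᵀ = λ(u₁,u₂)ᵀ for a unit quaternion λ, where (u₁,u₂) ≠ (0,0). Then Re λ = cos θ and Im λ (|u₁|² + |u₂|²) = sin θ (u₂ \bar{u}₁ − u₁ \bar{u}₂); in particular, since u₂ \bar{u}₁ − u₁ \bar{u}₂ is purely imaginary, the scalar part of λ is determined to be cos θ. -/
theorem stmt_8 (u₁ u₂ l : Quaternion ℝ) (θ : ℝ)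
    (hu : ¬(u₁ = 0 ∧ u₂ = 0)) (hl : ‖l‖ = 1)
    (h1 : Real.cos θ • u₁ + Real.sin θ • u₂ = l * u₁)
    (h2 : -(Real.sin θ) • u₁ + Real.cos θ • u₂ = l * u₂) :
    l.re = Real.cos θ ∧
      (‖u₁‖ ^ 2 + ‖u₂‖ ^ 2) • l.im =
        Real.sin θ • (u₂ * star u₁ - u₁ * star u₂) := by
  set w : Quaternion ℝ := u₂ * star u₁ - u₁ * star u₂ with hw
  set N : ℝ := ‖u₁‖ ^ 2 + ‖u₂‖ ^ 2 with hN
  have hwre : w.re = 0 := by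
    simp [hw, Quaternion.re_mul]
    ring
  have hNpos : 0 < N := by
    rcases not_and_or.mp hu with h | h
    · nlinarith [pow_pos (norm_pos_iff.mpr h) 2, sq_nonneg ‖u₂‖]
    · nlinarith [pow_pos (norm_pos_iff.mpr h) 2, sq_nonneg ‖u₁‖]
  have hcoe : u₁ * star u₁ + u₂ * star u₂ = ((N : ℝ) : Quaternion ℝ) := by
    rw [Quaternion.self_mul_star, Quaternion.self_mul_star, hN,
      Quaternion.normSq_eq_norm_mul_self, Quaternion.normSq_eq_norm_mul_self]
    push_cast
    rw [sq, sq]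
  have key : N • l = Real.cos θ • ((N : ℝ) : Quaternion ℝ) + Real.sin θ • w := by
    have e : l * (u₁ * star u₁ + u₂ * star u₂) = (l * u₁) * star u₁ + (l * u₂) * star u₂ := by
      noncomm_ring
    rw [hcoe, Quaternion.mul_coe_eq_smul, ← h1, ← h2] at e
    rw [e, hw, ← hcoe]
    simp only [add_mul, smul_mul_assoc]
    module
  have hre : N * l.re = Real.cos θ * N := by
    have := congrArg QuaternionAlgebra.re key
    simpa [hwre, Quaternion.re_smul] using this
  have hlre : l.re = Real.cos θ := by
    have h' : N * l.re = N * Real.cos θ := by linarith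
    exact mul_left_cancel₀ hNpos.ne' h'
  refine ⟨hlre, ?_⟩
  have him := congrArg Quaternion.im key
  have himw : w.im = w := by
    ext <;> simp [Quaternion.im, QuaternionAlgebra.im, hwre]
  rw [Quaternion.im_add, Quaternion.im_smul, Quaternion.im_smul, Quaternion.im_smul, himw] at him
  rw [him]
  ext <;> simp [Quaternion.im_coe]
end

section
/- Let θ ∈ ℝ, ρ ∈ ℂ with |ρ| = 1, and ε ∈ ℂ with |ε|² + |σ|² = 1 for some σ ∈ ℂ. The equation ρ + \bar{ρ} e^{2iθ} − 2 Re(ε) e^{iθ} = 0 holds if and only if \bar{ρ} e^{iθ} = Re ε + i√((Im ε)² + |σ|²) or \bar{ρ} e^{iθ} = Re ε − i√((Im ε)² + |σ|²). -/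
theorem stmt_11 (θ : ℝ) (ρ ε σ : ℂ) (hρ : ‖ρ‖ = 1)
    (hεσ : ‖ε‖ ^ 2 + ‖σ‖ ^ 2 = 1) :
    ρ + (starRingEnd ℂ) ρ * Complex.exp (2 * θ * Complex.I)
        - 2 * (ε.re : ℂ) * Complex.exp (θ * Complex.I) = 0 ↔
      (starRingEnd ℂ) ρ * Complex.exp (θ * Complex.I) =
          (ε.re : ℂ) + Complex.I * Real.sqrt (ε.im ^ 2 + ‖σ‖ ^ 2) ∨
        (starRingEnd ℂ) ρ * Complex.exp (θ * Complex.I) =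
          (ε.re : ℂ) - Complex.I * Real.sqrt (ε.im ^ 2 + ‖σ‖ ^ 2) := by
  set z : ℂ := (starRingEnd ℂ) ρ * Complex.exp (θ * Complex.I) with hzdef
  set s : ℝ := Real.sqrt (ε.im ^ 2 + ‖σ‖ ^ 2) with hsdef
  have hsnn : (0:ℝ) ≤ ε.im ^ 2 + ‖σ‖ ^ 2 := by positivity
  have hs2 : s ^ 2 = ε.im ^ 2 + ‖σ‖ ^ 2 := Real.sq_sqrt hsnn
  have hs0 : 0 ≤ s := Real.sqrt_nonneg _
  -- |z| = 1, so z.re^2 + z.im^2 = 1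
  have hzabs : ‖z‖ = 1 := by
    simp [hzdef, map_mul, Complex.norm_exp, hρ]
  have hzn : z.re ^ 2 + z.im ^ 2 = 1 := by
    have := Complex.sq_norm z
    rw [hzabs] at this
    rw [Complex.normSq_apply] at this
    nlinarith
  -- |ε|^2 = ε.re^2 + ε.im^2
  have hε : ε.re ^ 2 + ε.im ^ 2 + ‖σ‖ ^ 2 = 1 := by
    have := Complex.sq_norm ε
    rw [Complex.normSq_apply] at this
    nlinarith
  have hexp_ne : Complex.exp (θ * Complex.I) ≠ 0 := Complex.exp_ne_zero _
  -- conj z = ρ * exp(-(θ I))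
  have hconjz : (starRingEnd ℂ) z = ρ * Complex.exp (-(θ * Complex.I)) := by
    rw [hzdef, map_mul, RingHomCompTriple.comp_apply, RingHom.id_apply,
      ← Complex.exp_conj]
    congr 1
    simp
  have hρeq : ρ = (starRingEnd ℂ) z * Complex.exp (θ * Complex.I) := by
    rw [hconjz, mul_assoc, ← Complex.exp_add, neg_add_cancel, Complex.exp_zero, mul_one]
  have key : ρ + (starRingEnd ℂ) ρ * Complex.exp (2 * θ * Complex.I)
      - 2 * (ε.re : ℂ) * Complex.exp (θ * Complex.I)
      = Complex.exp (θ * Complex.I) * ((starRingEnd ℂ) z + z - 2 * ε.re) := by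
    have e2 : Complex.exp (2 * θ * Complex.I)
        = Complex.exp (θ * Complex.I) * Complex.exp (θ * Complex.I) := by
      rw [← Complex.exp_add]; ring_nf
    have e1 : Complex.exp (θ * Complex.I) * Complex.exp (-(θ * Complex.I)) = 1 := by
      rw [← Complex.exp_add]; simp
    rw [hconjz, hzdef, e2]
    linear_combination (-ρ) * e1
  rw [key, mul_eq_zero, or_iff_right hexp_ne]
  have hre : (starRingEnd ℂ) z + z - 2 * ε.re = 0 ↔ z.re = ε.re := by
    rw [add_comm, Complex.add_conj, sub_eq_zero]
    constructor
    · intro h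
      have := congrArg Complex.re h
      simpa using this
    · intro h
      rw [h]; push_cast; ring
  rw [hre]
  have heq1 : z = (ε.re : ℂ) + Complex.I * s ↔ z.re = ε.re ∧ z.im = s := by
    rw [Complex.ext_iff]
    simp
  have heq2 : z = (ε.re : ℂ) - Complex.I * s ↔ z.re = ε.re ∧ z.im = -s := by
    rw [Complex.ext_iff]
    constructor
    · rintro ⟨h1, h2⟩
      refine ⟨by simpa using h1, by simpa using h2⟩
    · rintro ⟨h1, h2⟩
      refine ⟨by simpa using h1, by simpa using h2⟩
  rw [heq1, heq2]
  constructor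
  · intro h
    have him2 : z.im ^ 2 = s ^ 2 := by rw [h] at hzn; linarith
    have : (z.im - s) * (z.im + s) = 0 := by nlinarith
    rcases mul_eq_zero.mp this with h' | h'
    · exact Or.inl ⟨h, by linarith⟩
    · exact Or.inr ⟨h, by linarith⟩
  · rintro (⟨h, _⟩ | ⟨h, _⟩) <;> exact h
end

section
/- Let Ω be a 2×3 integer matrix with columns (p_α, q_α), α = 1,2,3, and minors Δ_{αβ} = p_α q_β − p_β q_α. The system of congruences p_α t + q_α s ∈ 2πℤ for α = 1, 2, 3 (t, s ∈ [0, 2π)) has only the trivial solution t = s = 0 if and only if gcd(Δ_{12}, Δ_{13}, Δ_{23}) = ±1. -/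
lemma aux_gcd (d e : ℤ) (u : ℝ) (h1 : ∃ m : ℤ, (d : ℝ) * u = m)
    (h2 : ∃ n : ℤ, (e : ℝ) * u = n) :
    ∃ k : ℤ, ((Int.gcd d e : ℤ) : ℝ) * u = k := by
  obtain ⟨m, hm⟩ := h1
  obtain ⟨n, hn⟩ := h2
  refine ⟨Int.gcdA d e * m + Int.gcdB d e * n, ?_⟩
  have h' : ((Int.gcd d e : ℤ) : ℝ) = (d : ℝ) * (Int.gcdA d e : ℝ) + (e : ℝ) * (Int.gcdB d e : ℝ) := by
    exact_mod_cast congrArg (Int.cast : ℤ → ℝ) (Int.gcd_eq_gcd_ab d e)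
  push_cast at h' ⊢
  rw [h']
  linear_combination (Int.gcdA d e : ℝ) * hm + (Int.gcdB d e : ℝ) * hn

lemma aux_fract_dvd (l a : ℤ) (hl : l ≠ 0) (h : Int.fract ((a : ℝ) / l) = 0) : l ∣ a := by
  rw [Int.fract_eq_iff] at h
  obtain ⟨-, -, z, hz⟩ := h
  have hlr : (l : ℝ) ≠ 0 := Int.cast_ne_zero.mpr hl
  have : (a : ℝ) = l * z := by
    field_simp at hz
    linarith [hz]
  exact ⟨z, by exact_mod_cast this⟩

theorem stmt_17 (p q : Fin 3 → ℤ) :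
    (∀ t s : ℝ, t ∈ Set.Ico 0 (2 * Real.pi) → s ∈ Set.Ico 0 (2 * Real.pi) →
        (∀ α : Fin 3, ∃ k : ℤ, (p α : ℝ) * t + (q α : ℝ) * s = 2 * Real.pi * k) →
        t = 0 ∧ s = 0) ↔
      Int.gcd (Int.gcd (p 0 * q 1 - p 1 * q 0) (p 0 * q 2 - p 2 * q 0))
          (p 1 * q 2 - p 2 * q 1) = 1 := by
  have hpi : (0:ℝ) < 2 * Real.pi := by positivity
  have hpi' : (2 * Real.pi : ℝ) ≠ 0 := ne_of_gt hpi
  constructor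
  · -- forward: only trivial solution ⇒ gcd = 1
    intro h
    by_contra hg
    obtain ⟨l, hlp, hld⟩ := Nat.exists_prime_and_dvd hg
    have hl2 : (2:ℕ) ≤ l := hlp.two_le
    have hlz : (l : ℤ) ≠ 0 := by positivity
    have hlr : ((l:ℤ) : ℝ) ≠ 0 := Int.cast_ne_zero.mpr hlz
    have hd12 : (l : ℤ) ∣ (p 0 * q 1 - p 1 * q 0) := by
      refine dvd_trans (by exact_mod_cast hld) (dvd_trans (Int.gcd_dvd_left _ _) (Int.gcd_dvd_left _ _))
    have hd13 : (l : ℤ) ∣ (p 0 * q 2 - p 2 * q 0) := by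
      refine dvd_trans (by exact_mod_cast hld) (dvd_trans (Int.gcd_dvd_left _ _) (Int.gcd_dvd_right _ _))
    have hd23 : (l : ℤ) ∣ (p 1 * q 2 - p 2 * q 1) := by
      exact dvd_trans (by exact_mod_cast hld) (Int.gcd_dvd_right _ _)
    have hallm : ∀ α β : Fin 3, (l:ℤ) ∣ (p α * q β - p β * q α) := by
      intro α β
      fin_cases α <;> fin_cases β <;>
        first
          | exact hd12
          | exact hd13
          | exact hd23
          | exact dvd_sub_comm.mp hd12
          | exact dvd_sub_comm.mp hd13
          | exact dvd_sub_comm.mp hd23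
          | simp
    -- find kernel vector (a,b) mod l
    obtain ⟨a, b, hab, hker⟩ :
        ∃ a b : ℤ, (¬ (l:ℤ) ∣ a ∨ ¬ (l:ℤ) ∣ b) ∧ ∀ α : Fin 3, (l:ℤ) ∣ (p α * a + q α * b) := by
      by_cases hall : ∀ α : Fin 3, (l:ℤ) ∣ p α ∧ (l:ℤ) ∣ q α
      · refine ⟨1, 0, Or.inl ?_, fun α => ?_⟩
        · intro hd
          have := Int.le_of_dvd one_pos hd
          omega
        · simpa using (hall α).1
      · push_neg at hall
        obtain ⟨α, hα⟩ := hall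
        refine ⟨q α, -(p α), ?_, ?_⟩
        · by_cases hpα : (l:ℤ) ∣ p α
          · left
            intro hqα
            exact (hα hpα) hqα
          · right
            simpa using hpα
        · intro β
          have e : p β * q α + q β * -p α = p β * q α - p α * q β := by ring
          rw [e]
          exact hallm β α
    -- build the nontrivial solution
    set t := 2 * Real.pi * Int.fract ((a : ℝ) / (l:ℤ)) with ht
    set s := 2 * Real.pi * Int.fract ((b : ℝ) / (l:ℤ)) with hs
    have hmem : ∀ x : ℝ, 2 * Real.pi * Int.fract x ∈ Set.Ico (0:ℝ) (2 * Real.pi) := by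
      intro x
      constructor
      · exact mul_nonneg (by positivity) (Int.fract_nonneg x)
      · have h1 := Int.fract_lt_one x
        nlinarith [Int.fract_nonneg x]
    have hsol : ∀ α : Fin 3, ∃ k : ℤ, (p α : ℝ) * t + (q α : ℝ) * s = 2 * Real.pi * k := by
      intro α
      obtain ⟨c, hc⟩ := hker α
      refine ⟨c - p α * ⌊(a : ℝ) / (l:ℤ)⌋ - q α * ⌊(b : ℝ) / (l:ℤ)⌋, ?_⟩
      rw [ht, hs, Int.fract, Int.fract]
      have hc' : (p α : ℝ) * a + (q α : ℝ) * b = (l:ℝ) * c := by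
        exact_mod_cast congrArg (Int.cast : ℤ → ℝ) hc
      push_cast
      field_simp
      linear_combination hc'
    obtain ⟨ht0, hs0⟩ := h t s (hmem _) (hmem _) hsol
    have ha' : (l:ℤ) ∣ a := by
      apply aux_fract_dvd _ _ hlz
      have h0 : 2 * Real.pi * Int.fract ((a:ℝ)/(l:ℤ)) = 0 := ht.symm.trans ht0
      rcases mul_eq_zero.mp h0 with h' | h'
      · exact absurd h' hpi'
      · exact h'
    have hb' : (l:ℤ) ∣ b := by
      apply aux_fract_dvd _ _ hlz
      have h0 : 2 * Real.pi * Int.fract ((b:ℝ)/(l:ℤ)) = 0 := hs.symm.trans hs0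
      rcases mul_eq_zero.mp h0 with h' | h'
      · exact absurd h' hpi'
      · exact h'
    rcases hab with h' | h' <;> exact h' (by assumption)
  · -- backward: gcd = 1 ⇒ only trivial solution
    intro hg t s hts hss hk
    have hminor : ∀ α β : Fin 3,
        (∃ m : ℤ, ((p α * q β - p β * q α : ℤ) : ℝ) * (s / (2 * Real.pi)) = m) ∧
        (∃ m : ℤ, ((p α * q β - p β * q α : ℤ) : ℝ) * (t / (2 * Real.pi)) = m) := by
      intro α β
      obtain ⟨ka, hka⟩ := hk α
      obtain ⟨kb, hkb⟩ := hk β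
      constructor
      · refine ⟨p α * kb - p β * ka, ?_⟩
        push_cast
        field_simp
        linear_combination (p α : ℝ) * hkb - (p β : ℝ) * hka
      · refine ⟨q β * ka - q α * kb, ?_⟩
        push_cast
        field_simp
        linear_combination (q β : ℝ) * hka - (q α : ℝ) * hkb
    have key : ∀ u : ℝ, u ∈ Set.Ico (0:ℝ) 1 →
        (∀ α β : Fin 3, ∃ m : ℤ, ((p α * q β - p β * q α : ℤ) : ℝ) * u = m) → u = 0 := by
      intro u hu hdvd
      have g1 := aux_gcd _ _ u (hdvd 0 1) (hdvd 0 2)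
      have g2 := aux_gcd _ _ u g1 (hdvd 1 2)
      rw [hg] at g2
      obtain ⟨k, hk2⟩ := g2
      simp at hk2
      obtain ⟨hu0, hu1⟩ := hu
      rw [hk2] at hu0 hu1 ⊢
      have hk0 : (0:ℤ) ≤ k ∧ k < 1 := ⟨by exact_mod_cast hu0, by exact_mod_cast hu1⟩
      have : k = 0 := by omega
      simp [this]
    have hts' : t / (2 * Real.pi) = 0 := by
      apply key _ ⟨div_nonneg hts.1 hpi.le, (div_lt_one hpi).mpr hts.2⟩
      intro α β; exact (hminor α β).2
    have hss' : s / (2 * Real.pi) = 0 := by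
      apply key _ ⟨div_nonneg hss.1 hpi.le, (div_lt_one hpi).mpr hss.2⟩
      intro α β; exact (hminor α β).1
    constructor
    · field_simp at hts'; simpa using hts'
    · field_simp at hss'; simpa using hss'
end
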